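/- Let G be a connected graph of diameter D with a resolving set W = {w_1,...,w_b}. Then for every 1 ≤ i ≤ b and every 1 ≤ k ≤ D, the number of vertices at distance exactly k from w_i is at most (2k+1)^{b-1}. -/

import Mathlib

open SimpleGraph

/-- `W` is a resolving set for `G`: vertices with equal distance vectors to `W` are equal. -/
def IsResolvingSet {V : Type*} (G : SimpleGraph V) (W : Set V) : Prop :=
  ∀ u v : V, (∀ w ∈ W, G.dist w u = G.dist w v) → u = v

/-- The metric dimension of `G`: the least cardinality of a resolving set. -/
noncomputable def metricDim {V : Type*} [Fintype V] (G : SimpleGraph V) : ℕ :=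
  sInf {n | ∃ W : Finset V, W.card = n ∧ IsResolvingSet G ↑W}

/-- The threshold dimension of `G`: the least metric dimension over spanning supergraphs. -/
noncomputable def thresholdDim {V : Type*} [Fintype V] (G : SimpleGraph V) : ℕ :=
  sInf {n | ∃ H : SimpleGraph V, G ≤ H ∧ metricDim H = n}

/-- The strong product of `k` copies of the path on `{0, …, n-1}`. -/
def strongPow (n k : ℕ) : SimpleGraph (Fin k → Fin n) where
  Adj x y := x ≠ y ∧ ∀ i, ((x i : ℤ) - (y i : ℤ)).natAbs ≤ 1
  symm := by
    refine ⟨?_⟩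
    rintro x y ⟨h1, h2⟩
    refine ⟨fun h => h1 h.symm, fun i => ?_⟩
    rw [show (y i : ℤ) - (x i : ℤ) = -((x i : ℤ) - (y i : ℤ)) by ring, Int.natAbs_neg]
    exact h2 i
  loopless := ⟨fun x ⟨h, _⟩ => h rfl⟩

/-- If `G` is connected of diameter `D` with resolving set `{w 1, …, w b}`, then for
`1 ≤ k ≤ D` the number of vertices at distance exactly `k` from `w i` is at most
`(2k+1)^(b-1)`. -/
theorem card_sphere_le {V : Type*} [Fintype V] (G : SimpleGraph V) (hG : G.Connected)
    (D b : ℕ) (hD : G.diam = D) (w : Fin b → V) (hw : Function.Injective w)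
    (hres : IsResolvingSet G (Set.range w))
    (i : Fin b) (k : ℕ) (hk1 : 1 ≤ k) (hkD : k ≤ D) :
    {x : V | G.dist (w i) x = k}.ncard ≤ (2 * k + 1) ^ (b - 1) := by
  classical
  let T := {j : Fin b // j ≠ i} → Fin (2 * k + 1)
  let f : V → T := fun x j =>
    ⟨min (G.dist (w j.1) x + k - G.dist (w j.1) (w i)) (2 * k),
      Nat.lt_succ_of_le (min_le_right _ _)⟩
  have key : ∀ x ∈ {x : V | G.dist (w i) x = k}, ∀ j : {j : Fin b // j ≠ i},
      (f x j : ℕ) = G.dist (w j.1) x + k - G.dist (w j.1) (w i) := by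
    intro x hx j
    have hx' : G.dist (w i) x = k := hx
    have t1 : G.dist (w j.1) x ≤ G.dist (w j.1) (w i) + G.dist (w i) x :=
      hG.dist_triangle
    simp only [f]
    omega
  have hinj : Set.InjOn f {x : V | G.dist (w i) x = k} := by
    intro x hx y hy hxy
    apply hres
    rintro v ⟨j, rfl⟩
    by_cases hj : j = i
    · subst hj
      exact (hx : G.dist (w j) x = k).trans (hy : G.dist (w j) y = k).symm
    · have h1 : (f x ⟨j, hj⟩ : ℕ) = G.dist (w j) x + k - G.dist (w j) (w i) :=
        key x hx ⟨j, hj⟩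
      have h2 : (f y ⟨j, hj⟩ : ℕ) = G.dist (w j) y + k - G.dist (w j) (w i) :=
        key y hy ⟨j, hj⟩
      have h3 : (f x ⟨j, hj⟩ : ℕ) = (f y ⟨j, hj⟩ : ℕ) := by rw [hxy]
      have t1 : G.dist (w j) (w i) ≤ G.dist (w j) x + G.dist x (w i) :=
        hG.dist_triangle
      have t2 : G.dist (w j) (w i) ≤ G.dist (w j) y + G.dist y (w i) :=
        hG.dist_triangle
      have e1 : G.dist x (w i) = k := by rw [G.dist_comm]; exact hx
      have e2 : G.dist y (w i) = k := by rw [G.dist_comm]; exact hy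
      omega
  calc {x : V | G.dist (w i) x = k}.ncard
      ≤ (Set.univ : Set T).ncard :=
        Set.ncard_le_ncard_of_injOn f (fun a _ => Set.mem_univ _) hinj Set.finite_univ
    _ = Fintype.card T := by rw [Set.ncard_univ, Nat.card_eq_fintype_card]
    _ = (2 * k + 1) ^ (b - 1) := by
        rw [Fintype.card_fun, Fintype.card_fin]
        congr 1
        rw [Fintype.card_subtype_compl, Fintype.card_fin, Fintype.card_subtype_eq]
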